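/- Let (Ω, ℙ) be a probability space, d ∈ ℕ, γ ∈ (0,1), U_R ≥ 0, B ≥ 0 and c ∈ [1,2]. Let T : Ω → ℕ be a random variable with ℙ(T = t) = (1 − γ^{1/2})·γ^{t/2} for every t ∈ ℕ. Let (R_t)_{t∈ℕ} be real random variables with |R_t| ≤ U_R almost surely, and let (Z_τ)_{τ∈ℕ} be ℝ^d-valued random vectors with 𝔼[‖Z_τ‖^c] ≤ B^{c/2} for every τ. Assume T is independent of the σ-algebra generated by ((R_t), (Z_τ)). Then 𝔼[ ‖ Σ_{t=0}^{T} γ^{t/2} R_t (Σ_{τ=0}^{t} Z_τ) ‖^c ] ≤ 2·U_R^c·B^{c/2}/(1 − γ^{1/2})⁴. -/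

import Mathlib

open MeasureTheory ProbabilityTheory

private lemma tri_sum (g x : ℕ → ℝ) (n : ℕ) :
    ∑ t ∈ Finset.range (n+1), g t * ∑ τ ∈ Finset.range (t+1), x τ
      = ∑ τ ∈ Finset.range (n+1), (∑ t ∈ Finset.Ico τ (n+1), x τ * g t) := by
  induction n with
  | zero => simp [mul_comm]
  | succ n ih =>
    rw [Finset.sum_range_succ, ih, Finset.sum_range_succ
      (f := fun τ => ∑ t ∈ Finset.Ico τ (n+1+1), x τ * g t)]
    have h1 : ∀ τ ∈ Finset.range (n+1),
        (∑ t ∈ Finset.Ico τ (n+2), x τ * g t)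
          = (∑ t ∈ Finset.Ico τ (n+1), x τ * g t) + x τ * g (n+1) := by
      intro τ hτ
      rw [Finset.sum_Ico_succ_top (by simp at hτ; omega : τ ≤ n+1)]
    rw [Finset.sum_congr rfl h1, Finset.sum_add_distrib]
    have h2 : ∑ t ∈ Finset.Ico (n+1) (n+2), x (n+1) * g t = x (n+1) * g (n+1) := by
      rw [Nat.Ico_succ_singleton, Finset.sum_singleton]
    rw [h2, Finset.sum_range_succ (f := x), ← Finset.sum_mul]
    ring

private lemma jensen_sum (β c : ℝ) (hβ0 : 0 < β) (hβ1 : β < 1) (hc : 1 ≤ c)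
    (x : ℕ → ℝ) (hx : ∀ τ, 0 ≤ x τ) (n : ℕ) :
    (∑ τ ∈ Finset.range (n+1), β^τ * x τ) ^ c
      ≤ ((1-β)⁻¹) ^ (c-1) * ∑ τ ∈ Finset.range (n+1), β^τ * (x τ) ^ c := by
  have h1β : (0:ℝ) < 1 - β := by linarith
  set W := ∑ τ ∈ Finset.range (n+1), β^τ with hW
  have hWpos : 0 < W :=
    Finset.sum_pos (fun i _ => pow_pos hβ0 i) (by simp)
  have hWle : W ≤ (1-β)⁻¹ := by
    have : W = (1 - β^(n+1))/(1-β) := by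
      rw [hW, geom_sum_eq hβ1.ne]
      rw [div_eq_div_iff (sub_ne_zero.mpr hβ1.ne) h1β.ne']
      ring
    rw [this, ← one_div]
    gcongr
    nlinarith [pow_nonneg hβ0.le (n+1)]
  have key := Real.rpow_arith_mean_le_arith_mean_rpow (Finset.range (n+1))
    (fun τ => β^τ / W) x (fun i _ => by positivity)
    (by rw [← Finset.sum_div, div_self hWpos.ne']) (fun i _ => hx i) hc
  have e1 : ∑ τ ∈ Finset.range (n+1), β^τ * x τ
      = W * ∑ τ ∈ Finset.range (n+1), (β^τ / W) * x τ := by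
    rw [Finset.mul_sum]
    refine Finset.sum_congr rfl fun τ _ => ?_
    field_simp [hWpos.ne']
  have hsum_nonneg : 0 ≤ ∑ τ ∈ Finset.range (n+1), (β^τ / W) * x τ :=
    Finset.sum_nonneg fun τ _ =>
      mul_nonneg (div_nonneg (pow_nonneg hβ0.le τ) hWpos.le) (hx τ)
  have e2 : (∑ τ ∈ Finset.range (n+1), β^τ * x τ) ^ c
      = W ^ c * (∑ τ ∈ Finset.range (n+1), (β^τ / W) * x τ) ^ c := by
    rw [e1, Real.mul_rpow hWpos.le hsum_nonneg]
  have e3 : ∑ τ ∈ Finset.range (n+1), (β^τ / W) * (x τ) ^ c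
      = W⁻¹ * ∑ τ ∈ Finset.range (n+1), β^τ * (x τ) ^ c := by
    rw [Finset.mul_sum]
    refine Finset.sum_congr rfl fun τ _ => ?_
    field_simp [hWpos.ne']
  have hx_nonneg : 0 ≤ ∑ τ ∈ Finset.range (n+1), β^τ * (x τ) ^ c :=
    Finset.sum_nonneg fun τ _ =>
      mul_nonneg (pow_nonneg hβ0.le τ) (Real.rpow_nonneg (hx τ) c)
  calc (∑ τ ∈ Finset.range (n+1), β^τ * x τ) ^ c
      = W ^ c * (∑ τ ∈ Finset.range (n+1), (β^τ / W) * x τ) ^ c := e2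
    _ ≤ W ^ c * ∑ τ ∈ Finset.range (n+1), (β^τ / W) * (x τ) ^ c := by
        exact mul_le_mul_of_nonneg_left key (Real.rpow_nonneg hWpos.le c)
    _ = (W ^ c * W⁻¹) * ∑ τ ∈ Finset.range (n+1), β^τ * (x τ) ^ c := by
        rw [e3]; ring
    _ = W ^ (c-1) * ∑ τ ∈ Finset.range (n+1), β^τ * (x τ) ^ c := by
        congr 1
        rw [Real.rpow_sub hWpos, Real.rpow_one, div_eq_mul_inv]
    _ ≤ ((1-β)⁻¹) ^ (c-1) * ∑ τ ∈ Finset.range (n+1), β^τ * (x τ) ^ c := by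
        exact mul_le_mul_of_nonneg_right
          (Real.rpow_le_rpow hWpos.le hWle (by linarith)) hx_nonneg

private lemma norm_bound {E : Type*} [SeminormedAddCommGroup E] [NormedSpace ℝ E]
    (β UR : ℝ) (hβ0 : 0 < β) (hβ1 : β < 1) (hUR : 0 ≤ UR)
    (r : ℕ → ℝ) (hr : ∀ t, |r t| ≤ UR) (z : ℕ → E) (n : ℕ) :
    ‖∑ t ∈ Finset.range (n+1), (β^t * r t) • ∑ τ ∈ Finset.range (t+1), z τ‖
      ≤ (UR * (1-β)⁻¹) * ∑ τ ∈ Finset.range (n+1), β^τ * ‖z τ‖ := by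
  have h1β : (0:ℝ) < 1 - β := by linarith
  calc ‖∑ t ∈ Finset.range (n+1), (β^t * r t) • ∑ τ ∈ Finset.range (t+1), z τ‖
      ≤ ∑ t ∈ Finset.range (n+1), ‖(β^t * r t) • ∑ τ ∈ Finset.range (t+1), z τ‖ :=
        norm_sum_le _ _
    _ ≤ ∑ t ∈ Finset.range (n+1), (UR * β^t) * ∑ τ ∈ Finset.range (t+1), ‖z τ‖ := by
        refine Finset.sum_le_sum fun t _ => ?_
        rw [norm_smul]
        have hβt : (0:ℝ) ≤ β ^ t := pow_nonneg hβ0.le t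
        have h1 : ‖β^t * r t‖ ≤ UR * β^t := by
          rw [Real.norm_eq_abs, abs_mul, abs_of_nonneg hβt, mul_comm]
          exact mul_le_mul_of_nonneg_right (hr t) hβt
        have h2 : ‖∑ τ ∈ Finset.range (t+1), z τ‖ ≤ ∑ τ ∈ Finset.range (t+1), ‖z τ‖ :=
          norm_sum_le _ _
        exact mul_le_mul h1 h2 (norm_nonneg _)
          (mul_nonneg hUR hβt)
    _ = ∑ t ∈ Finset.range (n+1), β^t * ∑ τ ∈ Finset.range (t+1), UR * ‖z τ‖ := by
        refine Finset.sum_congr rfl fun t _ => ?_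
        rw [Finset.mul_sum, Finset.mul_sum]
        refine Finset.sum_congr rfl fun τ _ => ?_
        ring
    _ = ∑ τ ∈ Finset.range (n+1), ∑ t ∈ Finset.Ico τ (n+1), (UR * ‖z τ‖) * β^t :=
        tri_sum (fun t => β^t) (fun τ => UR * ‖z τ‖) n
    _ ≤ ∑ τ ∈ Finset.range (n+1), (UR * (1-β)⁻¹) * (β^τ * ‖z τ‖) := by
        refine Finset.sum_le_sum fun τ hτ => ?_
        rw [← Finset.mul_sum]
        have hIco : ∑ t ∈ Finset.Ico τ (n+1), β^t ≤ β^τ * (1-β)⁻¹ := by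
          have h := geom_sum_Ico_le_of_lt_one hβ0.le hβ1 (m := τ) (n := n+1)
          rwa [div_eq_mul_inv] at h
        calc (UR * ‖z τ‖) * ∑ t ∈ Finset.Ico τ (n+1), β^t
            ≤ (UR * ‖z τ‖) * (β^τ * (1-β)⁻¹) := by
              exact mul_le_mul_of_nonneg_left hIco (by positivity)
          _ = (UR * (1-β)⁻¹) * (β^τ * ‖z τ‖) := by ring
    _ = (UR * (1-β)⁻¹) * ∑ τ ∈ Finset.range (n+1), β^τ * ‖z τ‖ := by
        rw [Finset.mul_sum]

theorem stmt9 {Ω : Type*} [MeasurableSpace Ω] (P : Measure Ω) [IsProbabilityMeasure P]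
    (d : ℕ) (γ UR B c : ℝ) (hγ : γ ∈ Set.Ioo (0 : ℝ) 1) (hUR : 0 ≤ UR) (hB : 0 ≤ B)
    (hc : c ∈ Set.Icc (1 : ℝ) 2)
    (T : Ω → ℕ) (hT : Measurable T)
    (hTdist : ∀ t : ℕ, P {ω | T ω = t} = ENNReal.ofReal ((1 - Real.sqrt γ) * Real.sqrt γ ^ t))
    (R : ℕ → Ω → ℝ) (hRm : ∀ t, Measurable (R t)) (hRb : ∀ t, ∀ᵐ ω ∂P, |R t ω| ≤ UR)
    (Z : ℕ → Ω → EuclideanSpace ℝ (Fin d)) (hZm : ∀ τ, Measurable (Z τ))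
    (hZb : ∀ τ, ∫⁻ ω, ENNReal.ofReal (‖Z τ ω‖ ^ c) ∂P ≤ ENNReal.ofReal (B ^ (c / 2)))
    (hindep : Indep (MeasurableSpace.comap T inferInstance)
      (⨆ t : ℕ, (MeasurableSpace.comap (R t) inferInstance ⊔
        MeasurableSpace.comap (Z t) inferInstance)) P) :
    ∫⁻ ω, ENNReal.ofReal (‖∑ t ∈ Finset.range (T ω + 1),
        (Real.sqrt γ ^ t * R t ω) • ∑ τ ∈ Finset.range (t + 1), Z τ ω‖ ^ c) ∂P
      ≤ ENNReal.ofReal (2 * UR ^ c * B ^ (c / 2) / (1 - Real.sqrt γ) ^ 4) := by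
  set β := Real.sqrt γ with hβdef
  have hβ0 : 0 < β := Real.sqrt_pos.2 hγ.1
  have hβ1 : β < 1 := by
    rw [hβdef]
    have := Real.sqrt_lt' (x := γ) (y := 1) one_pos
    rw [one_pow] at this
    exact this.2 hγ.2
  have h1β : (0:ℝ) < 1 - β := by linarith
  have hc1 : (1:ℝ) ≤ c := hc.1
  have hc2 : c ≤ 2 := hc.2
  -- distribution of the horizon
  have hPge : ∀ τ : ℕ, P {ω | τ ≤ T ω} = ENNReal.ofReal (β ^ τ) := by
    intro τ
    have hsets : ∀ t : ℕ, MeasurableSet {ω | T ω = t} := fun t =>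
      hT (measurableSet_singleton t)
    have hcompl : {ω | τ ≤ T ω} = (⋃ t ∈ Finset.range τ, {ω | T ω = t})ᶜ := by
      ext ω
      simp only [Set.mem_setOf_eq, Set.mem_compl_iff, Set.mem_iUnion, Finset.mem_range,
        exists_prop, not_exists, not_and]
      constructor
      · intro h t ht; omega
      · intro h
        by_contra hlt
        exact h (T ω) (by omega) rfl
    have hdisj : (↑(Finset.range τ) : Set ℕ).PairwiseDisjoint (fun t => {ω | T ω = t}) := by
      intro a _ b _ hab
      simp only [Function.onFun, Set.disjoint_left, Set.mem_setOf_eq]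
      intro ω ha hb
      exact hab (ha ▸ hb ▸ rfl)
    have hpowle : β ^ τ ≤ 1 := pow_le_one₀ hβ0.le hβ1.le
    have hUnion : P (⋃ t ∈ Finset.range τ, {ω | T ω = t})
        = ENNReal.ofReal (1 - β ^ τ) := by
      rw [measure_biUnion_finset hdisj (fun t _ => hsets t),
        Finset.sum_congr rfl (fun t _ => hTdist t),
        ← ENNReal.ofReal_sum_of_nonneg (fun t _ => by positivity)]
      congr 1
      rw [← Finset.mul_sum, geom_sum_eq hβ1.ne]
      have hne : (β - 1) ≠ 0 := sub_ne_zero.mpr hβ1.ne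
      field_simp
      ring
    rw [hcompl, prob_compl_eq_one_sub
      (Finset.measurableSet_biUnion _ (fun t _ => hsets t)), hUnion,
      ← ENNReal.ofReal_one, ← ENNReal.ofReal_sub 1 (by linarith : (0:ℝ) ≤ 1 - β ^ τ)]
    congr 1
    ring
  -- the σ-algebras are sub-σ-algebras
  have hMT : MeasurableSpace.comap T inferInstance ≤ ‹MeasurableSpace Ω› := hT.comap_le
  have hMZ : (⨆ t : ℕ, (MeasurableSpace.comap (R t) inferInstance ⊔
      MeasurableSpace.comap (Z t) inferInstance)) ≤ ‹MeasurableSpace Ω› :=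
    iSup_le fun t => sup_le (hRm t).comap_le (hZm t).comap_le
  set K : ℝ := (UR * (1-β)⁻¹)^c * ((1-β)⁻¹)^(c-1) with hK
  have hK0 : 0 ≤ K :=
    mul_nonneg (Real.rpow_nonneg (by positivity) c) (Real.rpow_nonneg (by positivity) _)
  set q : ℕ → Ω → ENNReal := fun τ ω => ENNReal.ofReal (β^τ * ‖Z τ ω‖^c) with hqdef
  set e : ℕ → Ω → ENNReal := fun τ ω => if τ ≤ T ω then 1 else 0 with hedef
  have hψ : ∀ τ, Measurable (fun v : EuclideanSpace ℝ (Fin d) =>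
      ENNReal.ofReal (β^τ * ‖v‖^c)) := fun τ =>
    ((continuous_const.mul (continuous_norm.rpow_const
      (fun v => Or.inr (by linarith)))).measurable).ennreal_ofReal
  have hqmeas : ∀ τ, Measurable (q τ) := fun τ => (hψ τ).comp (hZm τ)
  have hemeas : ∀ τ, Measurable (e τ) := fun τ =>
    (measurable_from_top (f := fun n : ℕ => if τ ≤ n then (1:ENNReal) else 0)).comp hT
  have hInd : ∀ τ, ∫⁻ ω, e τ ω * q τ ω ∂P
      = (∫⁻ ω, e τ ω ∂P) * ∫⁻ ω, q τ ω ∂P := by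
    intro τ
    refine lintegral_mul_eq_lintegral_mul_lintegral_of_independent_measurableSpace
      hMT hMZ hindep ?_ ?_
    · exact (measurable_from_top (f := fun n : ℕ => if τ ≤ n then (1:ENNReal) else 0)).comp
        (Measurable.of_comap_le le_rfl)
    · have h1 : Measurable[MeasurableSpace.comap (Z τ) inferInstance] (q τ) :=
        (hψ τ).comp (Measurable.of_comap_le le_rfl)
      exact h1.mono (le_trans le_sup_right (le_iSup
        (fun t : ℕ => MeasurableSpace.comap (R t) inferInstance ⊔
          MeasurableSpace.comap (Z t) inferInstance) τ)) le_rfl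
  have hEe : ∀ τ, ∫⁻ ω, e τ ω ∂P = ENNReal.ofReal (β^τ) := by
    intro τ
    have heq : (fun ω => e τ ω) = Set.indicator {ω | τ ≤ T ω} (1 : Ω → ENNReal) := by
      ext ω
      by_cases h : τ ≤ T ω <;>
        simp [hedef, h, Set.indicator_apply, Set.mem_setOf_eq]
    have hms : MeasurableSet {ω | τ ≤ T ω} := hT measurableSet_Ici
    rw [heq, lintegral_indicator_one hms, hPge τ]
  have hEq : ∀ τ, ∫⁻ ω, q τ ω ∂P
      ≤ ENNReal.ofReal (β^τ) * ENNReal.ofReal (B^(c/2)) := by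
    intro τ
    have heq : ∀ ω, q τ ω = ENNReal.ofReal (β^τ) * ENNReal.ofReal (‖Z τ ω‖^c) := by
      intro ω
      rw [hqdef]
      exact ENNReal.ofReal_mul (by positivity)
    calc ∫⁻ ω, q τ ω ∂P
        = ∫⁻ ω, ENNReal.ofReal (β^τ) * ENNReal.ofReal (‖Z τ ω‖^c) ∂P := by
          exact lintegral_congr heq
      _ = ENNReal.ofReal (β^τ) * ∫⁻ ω, ENNReal.ofReal (‖Z τ ω‖^c) ∂P :=
          lintegral_const_mul' _ _ ENNReal.ofReal_ne_top
      _ ≤ _ := mul_le_mul_right (hZb τ) _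
  have hRae : ∀ᵐ ω ∂P, ∀ t, |R t ω| ≤ UR := ae_all_iff.2 hRb
  have hpt : ∀ᵐ ω ∂P, ENNReal.ofReal (‖∑ t ∈ Finset.range (T ω + 1),
        (β ^ t * R t ω) • ∑ τ ∈ Finset.range (t + 1), Z τ ω‖ ^ c)
      ≤ ENNReal.ofReal K * ∑' τ, e τ ω * q τ ω := by
    filter_upwards [hRae] with ω hω
    have htsum : ∑' τ, e τ ω * q τ ω = ∑ τ ∈ Finset.range (T ω + 1), q τ ω := by
      rw [tsum_eq_sum (s := Finset.range (T ω + 1)) ?_]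
      · refine Finset.sum_congr rfl fun τ hτ => ?_
        have h : τ ≤ T ω := by simp only [Finset.mem_range] at hτ; omega
        simp [hedef, h]
      · intro τ hτ
        have h : ¬ τ ≤ T ω := by simp only [Finset.mem_range] at hτ; omega
        simp [hedef, h]
    rw [htsum]
    have hsum' : ∑ τ ∈ Finset.range (T ω + 1), q τ ω
        = ENNReal.ofReal (∑ τ ∈ Finset.range (T ω + 1), β^τ * ‖Z τ ω‖^c) := by
      rw [ENNReal.ofReal_sum_of_nonneg (fun τ _ => by positivity)]
    rw [hsum', ← ENNReal.ofReal_mul hK0]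
    apply ENNReal.ofReal_le_ofReal
    have h1 : ‖∑ t ∈ Finset.range (T ω + 1), (β^t * R t ω) •
          ∑ τ ∈ Finset.range (t+1), Z τ ω‖
        ≤ (UR * (1-β)⁻¹) * ∑ τ ∈ Finset.range (T ω + 1), β^τ * ‖Z τ ω‖ :=
      norm_bound β UR hβ0 hβ1 hUR (fun t => R t ω) (fun t => hω t) (fun τ => Z τ ω) (T ω)
    have hsnn : (0:ℝ) ≤ ∑ τ ∈ Finset.range (T ω + 1), β^τ * ‖Z τ ω‖ :=
      Finset.sum_nonneg fun τ _ => by positivity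
    calc ‖∑ t ∈ Finset.range (T ω + 1), (β^t * R t ω) •
          ∑ τ ∈ Finset.range (t+1), Z τ ω‖ ^ c
        ≤ ((UR * (1-β)⁻¹) * ∑ τ ∈ Finset.range (T ω + 1), β^τ * ‖Z τ ω‖) ^ c :=
          Real.rpow_le_rpow (norm_nonneg _) h1 (by linarith)
      _ = (UR * (1-β)⁻¹)^c * (∑ τ ∈ Finset.range (T ω + 1), β^τ * ‖Z τ ω‖)^c :=
          Real.mul_rpow (by positivity) hsnn
      _ ≤ (UR * (1-β)⁻¹)^c * (((1-β)⁻¹)^(c-1) *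
            ∑ τ ∈ Finset.range (T ω + 1), β^τ * ‖Z τ ω‖^c) :=
          mul_le_mul_of_nonneg_left
            (jensen_sum β c hβ0 hβ1 hc1 (fun τ => ‖Z τ ω‖) (fun τ => norm_nonneg _) (T ω))
            (Real.rpow_nonneg (by positivity) c)
      _ = K * ∑ τ ∈ Finset.range (T ω + 1), β^τ * ‖Z τ ω‖^c := by
          rw [hK]; ring
  have hβ2 : (0:ℝ) < 1 - β^2 := by nlinarith
  have hfinal : K * ((1-β^2)⁻¹ * B^(c/2))
      ≤ 2 * UR ^ c * B ^ (c / 2) / (1 - β) ^ 4 := by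
    have ha1 : (1:ℝ) ≤ (1-β)⁻¹ := (one_le_inv₀ h1β).mpr (by linarith)
    have hinv2 : (1-β^2)⁻¹ ≤ (1-β)⁻¹ := by
      apply inv_anti₀ h1β
      nlinarith
    have hUC : (0:ℝ) ≤ UR ^ c := Real.rpow_nonneg hUR c
    have hBC : (0:ℝ) ≤ B ^ (c/2) := Real.rpow_nonneg hB _
    have hsplit : (UR * (1-β)⁻¹)^c = UR^c * ((1-β)⁻¹)^c :=
      Real.mul_rpow hUR (by positivity)
    have hcomb : ((1-β)⁻¹)^c * ((1-β)⁻¹)^(c-1) = ((1-β)⁻¹)^(2*c-1) := by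
      rw [← Real.rpow_add (by positivity)]
      ring_nf
    have hexp : ((1-β)⁻¹)^(2*c-1) ≤ ((1-β)⁻¹)^(3:ℝ) :=
      Real.rpow_le_rpow_of_exponent_le ha1 (by linarith)
    have h3 : ((1-β)⁻¹)^(3:ℝ) = ((1-β)^3)⁻¹ := by
      rw [show (3:ℝ) = ((3:ℕ):ℝ) by norm_num, Real.rpow_natCast, inv_pow]
    calc K * ((1-β^2)⁻¹ * B^(c/2))
        = (UR^c * B^(c/2)) * (((1-β)⁻¹)^c * ((1-β)⁻¹)^(c-1)) * (1-β^2)⁻¹ := by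
          rw [hK, hsplit]; ring
      _ = (UR^c * B^(c/2)) * ((1-β)⁻¹)^(2*c-1) * (1-β^2)⁻¹ := by rw [hcomb]
      _ ≤ (UR^c * B^(c/2)) * ((1-β)^3)⁻¹ * (1-β)⁻¹ := by
          rw [← h3]
          apply mul_le_mul
          · exact mul_le_mul_of_nonneg_left hexp (by positivity)
          · exact hinv2
          · positivity
          · positivity
      _ = UR^c * B^(c/2) / (1-β)^4 := by
          rw [show ((1-β):ℝ)^4 = (1-β)^3 * (1-β) by ring]
          field_simp
      _ ≤ 2 * UR ^ c * B ^ (c / 2) / (1 - β) ^ 4 := by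
          rw [div_le_div_iff₀ (by positivity) (by positivity)]
          nlinarith [mul_nonneg hUC hBC, pow_pos h1β 4]
  calc ∫⁻ ω, ENNReal.ofReal (‖∑ t ∈ Finset.range (T ω + 1),
        (β ^ t * R t ω) • ∑ τ ∈ Finset.range (t + 1), Z τ ω‖ ^ c) ∂P
      ≤ ∫⁻ ω, ENNReal.ofReal K * ∑' τ, e τ ω * q τ ω ∂P := lintegral_mono_ae hpt
    _ = ENNReal.ofReal K * ∫⁻ ω, ∑' τ, e τ ω * q τ ω ∂P :=
        lintegral_const_mul' _ _ ENNReal.ofReal_ne_top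
    _ = ENNReal.ofReal K * ∑' τ, ∫⁻ ω, e τ ω * q τ ω ∂P := by
        rw [lintegral_tsum (f := fun τ ω => e τ ω * q τ ω) fun τ => ((hemeas τ).mul (hqmeas τ)).aemeasurable]
    _ ≤ ENNReal.ofReal K * ∑' τ : ℕ,
          (ENNReal.ofReal (β^2))^τ * ENNReal.ofReal (B^(c/2)) := by
        refine mul_le_mul_right (ENNReal.tsum_le_tsum fun τ => ?_) _
        rw [hInd τ, hEe τ]
        calc ENNReal.ofReal (β^τ) * ∫⁻ ω, q τ ω ∂P
            ≤ ENNReal.ofReal (β^τ) * (ENNReal.ofReal (β^τ) * ENNReal.ofReal (B^(c/2))) :=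
              mul_le_mul_right (hEq τ) _
          _ = (ENNReal.ofReal (β^2))^τ * ENNReal.ofReal (B^(c/2)) := by
              rw [← mul_assoc, ← ENNReal.ofReal_mul (by positivity : (0:ℝ) ≤ β^τ),
                ← ENNReal.ofReal_pow (by positivity : (0:ℝ) ≤ β^2)]
              congr 1
              rw [← pow_add, ← two_mul, pow_mul]
    _ = ENNReal.ofReal K * ((1 - ENNReal.ofReal (β^2))⁻¹ * ENNReal.ofReal (B^(c/2))) := by
        rw [ENNReal.tsum_mul_right, ENNReal.tsum_geometric]
    _ = ENNReal.ofReal (K * ((1-β^2)⁻¹ * B^(c/2))) := by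
        have h2 : (1:ENNReal) - ENNReal.ofReal (β^2) = ENNReal.ofReal (1-β^2) := by
          rw [ENNReal.ofReal_sub 1 (sq_nonneg β), ENNReal.ofReal_one]
        rw [h2, ← ENNReal.ofReal_inv_of_pos hβ2,
          ← ENNReal.ofReal_mul (by positivity : (0:ℝ) ≤ (1-β^2)⁻¹),
          ← ENNReal.ofReal_mul hK0]
    _ ≤ _ := ENNReal.ofReal_le_ofReal hfinal
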